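/- Let Y be a symmetric square-integrable Lévy process with no Gaussian component and Lévy measure ν, and set ψ(s) = 4∫(1 ∧ |sx|²) ν(dx). Then for all t > 0, ‖Y_t‖₁ ≤ (1/π) ∫_ℝ (1 − e^{−tψ(s)})/s² ds ≤ (2 t^{1/2}/π) ∫_0^∞ ( (t ψ(t^{−1/2} s)) ∧ 1 ) / s² ds. -/

import Mathlib

open MeasureTheory Real Set Filter


-- ∫_{u>0} u e^{-su} du = 1/s², for s > 0
lemma stmt18_aux_exp (s : ℝ) (hs : 0 < s) :
    IntegrableOn (fun u : ℝ => u * Real.exp (-(s * u))) (Ioi 0) ∧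
    ∫ u in Ioi (0:ℝ), u * Real.exp (-(s * u)) = 1 / s ^ 2 := by
  set g : ℝ → ℝ := fun u => -(u / s) * Real.exp (-(s * u)) - (1 / s ^ 2) * Real.exp (-(s * u)) with hg
  have hderiv : ∀ u : ℝ, HasDerivAt g (u * Real.exp (-(s * u))) u := by
    intro u
    have he : HasDerivAt (fun u : ℝ => Real.exp (-(s * u))) (-s * Real.exp (-(s*u))) u := by
      have h1 : HasDerivAt (fun u : ℝ => -(s * u)) (-s) u := by
        simpa using ((hasDerivAt_id u).const_mul s).fun_neg
      simpa [mul_comm] using h1.exp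
    have h2 : HasDerivAt (fun u : ℝ => -(u / s)) (-(1/s)) u := by
      simpa using ((hasDerivAt_id u).div_const s).fun_neg
    have h3 := (h2.fun_mul he).fun_sub (he.const_mul (1 / s ^ 2))
    convert h3 using 1
    · rfl
    · rfl
    have hs0 : s ≠ 0 := hs.ne'
    field_simp
    ring
  have htend : Tendsto g atTop (nhds 0) := by
    have h1 : Tendsto (fun u : ℝ => u ^ (1:ℝ) * Real.exp (-s * u)) atTop (nhds 0) :=
      tendsto_rpow_mul_exp_neg_mul_atTop_nhds_zero 1 s hs
    have h2 : Tendsto (fun u : ℝ => u * Real.exp (-(s * u))) atTop (nhds 0) := by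
      apply h1.congr'
      filter_upwards [eventually_gt_atTop (0:ℝ)] with u hu
      rw [Real.rpow_one, neg_mul]
    have hmul : Tendsto (fun u : ℝ => s * u) atTop atTop :=
      Filter.Tendsto.const_mul_atTop hs tendsto_id
    have h3 : Tendsto (fun u : ℝ => Real.exp (-(s*u))) atTop (nhds 0) := by
      exact Real.tendsto_exp_neg_atTop_nhds_zero.comp hmul
    have := ((h2.const_mul (-(1/s))).sub (h3.const_mul (1 / s^2)))
    simpa [hg, mul_comm, mul_assoc, mul_left_comm, div_eq_mul_inv] using this
  have hpos : ∀ u ∈ Ioi (0:ℝ), 0 ≤ u * Real.exp (-(s * u)) := fun u hu =>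
    mul_nonneg (le_of_lt hu) (Real.exp_pos _).le
  constructor
  · exact integrableOn_Ioi_deriv_of_nonneg' (fun u _ => hderiv u) hpos htend
  · rw [integral_Ioi_of_hasDerivAt_of_nonneg' (fun u _ => hderiv u) hpos htend]
    simp [hg]

-- ∫_{s>0} (1-cos s) e^{-us} ds = 1/u - u/(1+u²), for u > 0
lemma stmt18_aux_cos (u : ℝ) (hu : 0 < u) :
    IntegrableOn (fun s : ℝ => (1 - Real.cos s) * Real.exp (-(u * s))) (Ioi 0) ∧
    ∫ s in Ioi (0:ℝ), (1 - Real.cos s) * Real.exp (-(u * s)) = 1 / u - u / (1 + u ^ 2) := by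
  set g : ℝ → ℝ := fun s => -(1/u) * Real.exp (-(u * s))
      - (Real.exp (-(u * s)) * (Real.sin s - u * Real.cos s)) / (1 + u ^ 2) with hg
  have hderiv : ∀ s : ℝ, HasDerivAt g ((1 - Real.cos s) * Real.exp (-(u * s))) s := by
    intro s
    have he : HasDerivAt (fun s : ℝ => Real.exp (-(u * s))) (-u * Real.exp (-(u*s))) s := by
      have h1 : HasDerivAt (fun s : ℝ => -(u * s)) (-u) s := by
        simpa using ((hasDerivAt_id s).const_mul u).fun_neg
      simpa [mul_comm] using h1.exp
    have hsc : HasDerivAt (fun s : ℝ => Real.sin s - u * Real.cos s)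
        (Real.cos s + u * Real.sin s) s := by
      have := (Real.hasDerivAt_sin s).fun_sub ((Real.hasDerivAt_cos s).const_mul u)
      simpa [mul_comm] using this
    have h3 := ((he.const_mul (-(1/u))).fun_sub ((he.fun_mul hsc).div_const (1 + u ^ 2)))
    convert h3 using 1
    · rfl
    · rfl
    have h1u : (1 + u ^ 2) ≠ 0 := by positivity
    have hu0 : u ≠ 0 := hu.ne'
    field_simp
    ring
  have htend : Tendsto g atTop (nhds 0) := by
    have hmul : Tendsto (fun s : ℝ => u * s) atTop atTop :=
      Filter.Tendsto.const_mul_atTop hu tendsto_id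
    have h3 : Tendsto (fun s : ℝ => Real.exp (-(u*s))) atTop (nhds 0) := by
      exact Real.tendsto_exp_neg_atTop_nhds_zero.comp hmul
    have hb : Tendsto (fun s : ℝ => Real.exp (-(u * s)) * (Real.sin s - u * Real.cos s))
        atTop (nhds 0) := by
      have h0 : Tendsto (fun s : ℝ => (1 + u) * Real.exp (-(u * s))) atTop (nhds 0) := by
        simpa using h3.const_mul (1 + u)
      apply squeeze_zero_norm (fun s => ?_) h0
      have h1 : |Real.sin s - u * Real.cos s| ≤ 1 + u := by
        calc |Real.sin s - u * Real.cos s| ≤ |Real.sin s| + |u * Real.cos s| := abs_sub _ _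
        _ ≤ 1 + u := by
          gcongr
          · exact Real.abs_sin_le_one s
          · rw [abs_mul, abs_of_pos hu]
            nlinarith [Real.abs_cos_le_one s, hu]
      rw [norm_mul, Real.norm_eq_abs, Real.norm_eq_abs, abs_of_pos (Real.exp_pos _), mul_comm]
      exact mul_le_mul_of_nonneg_right h1 (Real.exp_pos _).le
    have := ((h3.const_mul (-(1/u))).sub (hb.div_const (1 + u^2)))
    simpa [hg] using this
  have hpos : ∀ s ∈ Ioi (0:ℝ), 0 ≤ (1 - Real.cos s) * Real.exp (-(u * s)) := fun s _ =>
    mul_nonneg (by nlinarith [Real.cos_le_one s]) (Real.exp_pos _).le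
  constructor
  · exact integrableOn_Ioi_deriv_of_nonneg' (fun s _ => hderiv s) hpos htend
  · rw [integral_Ioi_of_hasDerivAt_of_nonneg' (fun s _ => hderiv s) hpos htend]
    have h1u : (1 + u ^ 2) ≠ 0 := by positivity
    simp only [hg, zero_sub, mul_zero, neg_zero, Real.exp_zero, Real.sin_zero, Real.cos_zero]
    field_simp
    ring

lemma stmt18_cossq :
    IntegrableOn (fun s : ℝ => (1 - Real.cos s) / s ^ 2) (Ioi 0) ∧
    ∫ s in Ioi (0:ℝ), (1 - Real.cos s) / s ^ 2 = π / 2 := by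
  set μ1 : Measure ℝ := volume.restrict (Ioi (0:ℝ)) with hμ1
  set F : ℝ → ℝ → ℝ := fun s u => (1 - Real.cos s) * (u * Real.exp (-(s * u))) with hF
  have hFcont : Continuous (Function.uncurry F) := by
    apply Continuous.mul
    · exact (continuous_const.sub (Real.continuous_cos.comp continuous_fst))
    · exact continuous_snd.mul ((continuous_fst.mul continuous_snd).neg.rexp)
  have hFmeas : AEMeasurable (Function.uncurry fun s u => ENNReal.ofReal (F s u)) (μ1.prod μ1) :=
    (ENNReal.measurable_ofReal.comp hFcont.measurable).aemeasurable
  have hgnn : ∀ s : ℝ, 0 ≤ (1 - Real.cos s) / s ^ 2 := fun s =>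
    div_nonneg (by nlinarith [Real.cos_le_one s]) (sq_nonneg s)
  have step1 : ∀ s ∈ Ioi (0:ℝ),
      ENNReal.ofReal ((1 - Real.cos s) / s ^ 2) = ∫⁻ u, ENNReal.ofReal (F s u) ∂μ1 := by
    intro s hs
    have hi : Integrable (fun u => F s u) μ1 := ((stmt18_aux_exp s hs).1.const_mul _)
    have hnn : 0 ≤ᵐ[μ1] fun u => F s u := by
      filter_upwards [ae_restrict_mem measurableSet_Ioi] with u hu
      exact mul_nonneg (by nlinarith [Real.cos_le_one s])
        (mul_nonneg (le_of_lt hu) (Real.exp_pos _).le)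
    rw [← ofReal_integral_eq_lintegral_ofReal hi hnn]
    congr 1
    rw [hF]
    simp only
    rw [integral_const_mul, (stmt18_aux_exp s hs).2]
    ring
  have step3 : ∀ u ∈ Ioi (0:ℝ),
      (∫⁻ s, ENNReal.ofReal (F s u) ∂μ1) = ENNReal.ofReal (1 / (1 + u ^ 2)) := by
    intro u hu
    have heq : (fun s => F s u) = fun s => u * ((1 - Real.cos s) * Real.exp (-(u * s))) := by
      funext s; rw [hF]; simp only; ring_nf
    have hi : Integrable (fun s => F s u) μ1 := by
      rw [heq]; exact ((stmt18_aux_cos u hu).1.const_mul _)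
    have hnn : 0 ≤ᵐ[μ1] fun s => F s u := by
      filter_upwards with s
      have : F s u = u * ((1 - Real.cos s) * Real.exp (-(u * s))) := by
        rw [hF]; simp only; ring_nf
      simp only [Pi.zero_apply, this]
      exact mul_nonneg (le_of_lt hu)
        (mul_nonneg (by nlinarith [Real.cos_le_one s]) (Real.exp_pos _).le)
    rw [← ofReal_integral_eq_lintegral_ofReal hi hnn]
    congr 1
    rw [heq, integral_const_mul, (stmt18_aux_cos u hu).2]
    have h1u : (1 + u ^ 2) ≠ 0 := by positivity
    have hu0 : u ≠ 0 := ne_of_gt hu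
    field_simp
    ring
  have key : ∫⁻ s, ENNReal.ofReal ((1 - Real.cos s) / s ^ 2) ∂μ1 = ENNReal.ofReal (π / 2) := by
    have e1 : ∫⁻ s, ENNReal.ofReal ((1 - Real.cos s) / s ^ 2) ∂μ1
        = ∫⁻ s, ∫⁻ u, ENNReal.ofReal (F s u) ∂μ1 ∂μ1 := by
      rw [hμ1]
      refine setLIntegral_congr_fun measurableSet_Ioi ?_
      intro s hs
      exact step1 s hs
    have e2 : ∫⁻ s, ∫⁻ u, ENNReal.ofReal (F s u) ∂μ1 ∂μ1
        = ∫⁻ u, ∫⁻ s, ENNReal.ofReal (F s u) ∂μ1 ∂μ1 :=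
      lintegral_lintegral_swap hFmeas
    have e3 : ∫⁻ u, ∫⁻ s, ENNReal.ofReal (F s u) ∂μ1 ∂μ1
        = ∫⁻ u, ENNReal.ofReal (1 / (1 + u ^ 2)) ∂μ1 := by
      rw [hμ1]
      refine setLIntegral_congr_fun measurableSet_Ioi ?_
      intro u hu
      exact step3 u hu
    have e4 : ∫⁻ u, ENNReal.ofReal (1 / (1 + u ^ 2)) ∂μ1 = ENNReal.ofReal (π / 2) := by
      have hi : Integrable (fun u : ℝ => 1 / (1 + u ^ 2)) μ1 := by
        simp only [one_div]
        exact integrable_inv_one_add_sq.restrict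
      have hnn : 0 ≤ᵐ[μ1] fun u : ℝ => 1 / (1 + u ^ 2) := by
        filter_upwards with u; positivity
      rw [← ofReal_integral_eq_lintegral_ofReal hi hnn]
      congr 1
      simp only [one_div, hμ1]
      rw [integral_Ioi_inv_one_add_sq]
      simp [Real.arctan_zero]
    rw [e1, e2, e3, e4]
  have hmeas : Measurable (fun s : ℝ => (1 - Real.cos s) / s ^ 2) :=
    (measurable_const.sub Real.measurable_cos).div (measurable_id.pow_const 2)
  have hint : IntegrableOn (fun s : ℝ => (1 - Real.cos s) / s ^ 2) (Ioi 0) := by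
    refine ⟨hmeas.aestronglyMeasurable, ?_⟩
    rw [hasFiniteIntegral_iff_ofReal (by filter_upwards with s using hgnn s)]
    rw [← hμ1, key]
    exact ENNReal.ofReal_lt_top
  refine ⟨hint, ?_⟩
  rw [integral_eq_lintegral_of_nonneg_ae (by filter_upwards with s using hgnn s)
    hmeas.aestronglyMeasurable.restrict, ← hμ1, key, ENNReal.toReal_ofReal (by positivity)]

lemma stmt18_reflect {f : ℝ → ℝ} (hf : IntegrableOn (fun x => f (-x)) (Ioi 0)) :
    IntegrableOn f (Iio 0) := by
  have h1 : volume.restrict (Iio (0:ℝ)) = Measure.map Neg.neg (volume.restrict (Ioi 0)) := by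
    rw [show Ioi (0:ℝ) = Neg.neg ⁻¹' (Iio 0) by simp]
    rw [← Measure.restrict_map measurable_neg measurableSet_Iio, Measure.map_neg_eq_self]
  rw [IntegrableOn, h1, measurableEmbedding_neg.integrable_map_iff]
  exact hf

lemma stmt18_abs (a : ℝ) :
    Integrable (fun s : ℝ => (1 - Real.cos (a * s)) / s ^ 2) ∧
    ∫ s : ℝ, (1 - Real.cos (a * s)) / s ^ 2 = π * |a| := by
  rcases eq_or_ne a 0 with rfl | ha
  · simp
  · set c := |a| with hc
    have hcpos : 0 < c := abs_pos.mpr ha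
    have hceq : ∀ s : ℝ, Real.cos (a * s) = Real.cos (c * s) := by
      intro s
      rcases abs_choice a with h | h
      · rw [hc, h]
      · rw [hc, h, neg_mul, Real.cos_neg]
    set g0 : ℝ → ℝ := fun y => (1 - Real.cos y) / y ^ 2 with hg0def
    have hg0 := stmt18_cossq
    have heq2 : ∀ s : ℝ, (1 - Real.cos (a * s)) / s ^ 2 = c ^ 2 * g0 (c * s) := by
      intro s
      rw [hceq s]
      rcases eq_or_ne s 0 with rfl | hs
      · simp [hg0def]
      · rw [hg0def]
        simp only
        rw [mul_pow]
        field_simp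
    have hIoic : IntegrableOn (fun s : ℝ => g0 (c * s)) (Ioi 0) := by
      have h := integrableOn_Ioi_comp_mul_left_iff g0 0 hcpos
      rw [mul_zero] at h
      exact h.mpr hg0.1
    have hIoi : IntegrableOn (fun s : ℝ => (1 - Real.cos (a * s)) / s ^ 2) (Ioi 0) := by
      have h2 : IntegrableOn (fun s : ℝ => c ^ 2 * g0 (c * s)) (Ioi 0) := hIoic.const_mul _
      exact h2.congr_fun (fun s _ => (heq2 s).symm) measurableSet_Ioi
    have hIoiVal : ∫ s in Ioi (0:ℝ), (1 - Real.cos (a * s)) / s ^ 2 = c * (π / 2) := by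
      have e1 : ∫ s in Ioi (0:ℝ), (1 - Real.cos (a * s)) / s ^ 2
          = ∫ s in Ioi (0:ℝ), c ^ 2 * g0 (c * s) := by
        refine setIntegral_congr_fun measurableSet_Ioi fun s _ => heq2 s
      rw [e1, integral_const_mul]
      have e2 := integral_comp_mul_left_Ioi g0 0 hcpos
      rw [mul_zero] at e2
      rw [e2, smul_eq_mul, hg0.2]
      field_simp
    have hfneg : ∀ s : ℝ, (1 - Real.cos (a * -s)) / (-s) ^ 2
        = (1 - Real.cos (a * s)) / s ^ 2 := by
      intro s
      rw [mul_neg, Real.cos_neg, neg_pow, pow_two, pow_two]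
      ring_nf
    have hIio : IntegrableOn (fun s : ℝ => (1 - Real.cos (a * s)) / s ^ 2) (Iio 0) := by
      apply stmt18_reflect
      apply hIoi.congr_fun _ measurableSet_Ioi
      intro s _
      exact (hfneg s).symm
    have hIioVal : ∫ s in Iio (0:ℝ), (1 - Real.cos (a * s)) / s ^ 2 = c * (π / 2) := by
      have := integral_comp_neg_Ioi (0:ℝ) (fun s => (1 - Real.cos (a * s)) / s ^ 2)
      rw [neg_zero] at this
      have e3 : ∫ s in Ioi (0:ℝ), (1 - Real.cos (a * -s)) / (-s) ^ 2
          = ∫ s in Ioi (0:ℝ), (1 - Real.cos (a * s)) / s ^ 2 :=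
        setIntegral_congr_fun measurableSet_Ioi fun s _ => hfneg s
      rw [← hIoiVal, ← integral_Iic_eq_integral_Iio, ← this, ← e3]
    have hIic : IntegrableOn (fun s : ℝ => (1 - Real.cos (a * s)) / s ^ 2) (Iic 0) :=
      (integrableOn_Iic_iff_integrableOn_Iio).mpr hIio
    have hIicVal : ∫ s in Iic (0:ℝ), (1 - Real.cos (a * s)) / s ^ 2 = c * (π / 2) := by
      rw [integral_Iic_eq_integral_Iio, hIioVal]
    constructor
    · rw [← integrableOn_univ, ← Set.Iic_union_Ioi (a := (0:ℝ))]
      exact hIic.union hIoi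
    · rw [← intervalIntegral.integral_Iic_add_Ioi hIic hIoi, hIicVal, hIoiVal, hc]
      ring

lemma stmt18_abs' (a : ℝ) :
    Integrable (fun s : ℝ => (1 - Real.cos (s * a)) / s ^ 2) ∧
    ∫ s : ℝ, (1 - Real.cos (s * a)) / s ^ 2 = π * |a| := by
  have h := stmt18_abs a
  have he : (fun s : ℝ => (1 - Real.cos (s * a)) / s ^ 2)
      = fun s : ℝ => (1 - Real.cos (a * s)) / s ^ 2 := by
    funext s; rw [mul_comm]
  rw [he]
  exact h

lemma stmt18_one_sub_cos_le (y : ℝ) : 1 - Real.cos y ≤ 4 * min 1 (y ^ 2) := by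
  rcases le_total (1:ℝ) (y ^ 2) with h | h
  · rw [min_eq_left h]
    nlinarith [Real.neg_one_le_cos y]
  · rw [min_eq_right h]
    nlinarith [Real.one_sub_sq_div_two_le_cos (x := y), sq_nonneg y]

lemma stmt18_one_sub_exp_le {x : ℝ} (hx : 0 ≤ x) : 1 - Real.exp (-x) ≤ min x 1 := by
  apply le_min
  · nlinarith [Real.add_one_le_exp (-x)]
  · nlinarith [Real.exp_pos (-x)]

-- min(A, s⁻²) ≤ 2 max(A,1) (1+s²)⁻¹
lemma stmt18_bound_le {A : ℝ} (hA : 0 ≤ A) (s : ℝ) :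
    min A ((s ^ 2)⁻¹) ≤ 2 * max A 1 * (1 + s ^ 2)⁻¹ := by
  have h2 : (0:ℝ) < 1 + s ^ 2 := by positivity
  rcases le_total (s ^ 2) 1 with h | h
  · calc min A ((s ^ 2)⁻¹) ≤ A := min_le_left _ _
      _ ≤ max A 1 := le_max_left _ _
      _ = 2 * max A 1 * 2⁻¹ := by ring
      _ ≤ 2 * max A 1 * (1 + s ^ 2)⁻¹ := by
          apply mul_le_mul_of_nonneg_left _
            (mul_nonneg two_pos.le (le_trans zero_le_one (le_max_right A 1)))
          exact inv_anti₀ h2 (by linarith)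
  · have hs : (0:ℝ) < s ^ 2 := lt_of_lt_of_le one_pos h
    calc min A ((s ^ 2)⁻¹) ≤ (s ^ 2)⁻¹ := min_le_right _ _
      _ ≤ 2 * (1 + s ^ 2)⁻¹ := by
          rw [inv_eq_one_div, inv_eq_one_div, mul_one_div, div_le_div_iff₀ hs h2]
          nlinarith
      _ ≤ 2 * max A 1 * (1 + s ^ 2)⁻¹ := by
          rw [mul_assoc]
          have h1 : (1:ℝ) ≤ max A 1 := le_max_right _ _
          nlinarith [inv_pos.mpr h2]

theorem stmt18 {Ω : Type*} [MeasurableSpace Ω] (μ : Measure Ω) [IsProbabilityMeasure μ]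
    (ν : Measure ℝ) [SigmaFinite ν] (hν : Integrable (fun x : ℝ => x ^ 2) ν)
    (Y : ℝ → Ω → ℝ) (hint : ∀ t, 0 < t → Integrable (Y t) μ)
    (hchar : ∀ t, 0 < t → ∀ s : ℝ,
      (∫ ω, Complex.exp (s * Y t ω * Complex.I) ∂μ) =
        Real.exp (-t * ∫ x, (1 - Real.cos (s * x)) ∂ν))
    (t : ℝ) (ht : 0 < t) :
    ((∫ ω, |Y t ω| ∂μ) ≤
      (1 / Real.pi) *
        ∫ s : ℝ, (1 - Real.exp (-t * (4 * ∫ x, min 1 ((s * x) ^ 2) ∂ν))) / s ^ 2) ∧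
    ((1 / Real.pi) *
        (∫ s : ℝ, (1 - Real.exp (-t * (4 * ∫ x, min 1 ((s * x) ^ 2) ∂ν))) / s ^ 2) ≤
      (2 * t ^ ((1:ℝ)/2) / Real.pi) *
        ∫ s in Set.Ioi (0:ℝ),
          min (t * (4 * ∫ x, min 1 ((t ^ (-(1:ℝ)/2) * s * x) ^ 2) ∂ν)) 1 / s ^ 2) := by
  set ψ : ℝ → ℝ := fun s => 4 * ∫ x, min 1 ((s * x) ^ 2) ∂ν with hψdef
  set C : ℝ := ∫ x, x ^ 2 ∂ν with hCdef
  have hC : 0 ≤ C := integral_nonneg fun x => sq_nonneg x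
  -- integrability of min 1 ((s x)^2)
  have hmin_int : ∀ s : ℝ, Integrable (fun x => min 1 ((s * x) ^ 2)) ν := by
    intro s
    apply Integrable.mono' (hν.const_mul (s ^ 2))
    · exact (continuous_const.min ((continuous_const.mul continuous_id).pow 2)).aestronglyMeasurable
    · filter_upwards with x
      rw [Real.norm_eq_abs, abs_of_nonneg (le_min zero_le_one (sq_nonneg _))]
      calc min 1 ((s * x) ^ 2) ≤ (s * x) ^ 2 := min_le_right _ _
        _ = s ^ 2 * x ^ 2 := by ring
  have hψnn : ∀ s, 0 ≤ ψ s := fun s => by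
    have : 0 ≤ ∫ x, min 1 ((s * x) ^ 2) ∂ν :=
      integral_nonneg fun x => le_min zero_le_one (sq_nonneg _)
    rw [hψdef]; positivity
  have hψle : ∀ s : ℝ, ψ s ≤ 4 * (s ^ 2 * C) := by
    intro s
    rw [hψdef, hCdef]
    simp only
    rw [← integral_const_mul (s^2)]
    have h := integral_mono (hmin_int s) (hν.const_mul (s ^ 2)) (fun x => by
      calc min 1 ((s * x) ^ 2) ≤ (s * x) ^ 2 := min_le_right _ _
        _ = s ^ 2 * x ^ 2 := by ring)
    linarith
  have hψeven : ∀ s, ψ (-s) = ψ s := by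
    intro s
    rw [hψdef]
    simp only
    congr 1
    have : (fun x => min 1 ((-s * x) ^ 2)) = fun x => min 1 ((s * x) ^ 2) := by
      funext x; ring_nf
    rw [this]
  -- continuity of ψ
  have hψcont : Continuous ψ := by
    rw [hψdef]
    apply Continuous.mul continuous_const
    rw [continuous_iff_continuousAt]
    intro s₀
    apply continuousAt_of_dominated (bound := fun x => (|s₀| + 1) ^ 2 * x ^ 2)
    · filter_upwards with s
      exact (continuous_const.min
        ((continuous_const.mul continuous_id).pow 2)).aestronglyMeasurable
    · filter_upwards [Metric.ball_mem_nhds s₀ one_pos] with s hs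
      filter_upwards with x
      rw [Real.norm_eq_abs, abs_of_nonneg (le_min zero_le_one (sq_nonneg _))]
      have hsb : |s| ≤ |s₀| + 1 := by
        have := abs_sub_abs_le_abs_sub s s₀
        have h2 : |s - s₀| < 1 := by simpa [Real.dist_eq] using hs
        linarith
      calc min 1 ((s * x) ^ 2) ≤ (s * x) ^ 2 := min_le_right _ _
        _ ≤ (|s₀| + 1) ^ 2 * x ^ 2 := by
            rw [mul_pow]
            have : s ^ 2 ≤ (|s₀| + 1) ^ 2 := by
              rw [← sq_abs s]
              apply pow_le_pow_left₀ (abs_nonneg s) hsb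
            nlinarith [sq_nonneg x]
    · exact hν.const_mul _
    · filter_upwards with x
      exact (continuous_const.min
        ((continuous_id.mul continuous_const).pow 2)).continuousAt
  have hψmeas : Measurable ψ := hψcont.measurable
  -- the Lévy exponent c(s)
  set cfun : ℝ → ℝ := fun s => ∫ x, (1 - Real.cos (s * x)) ∂ν with hcfundef
  have hcos_int : ∀ s : ℝ, Integrable (fun x => 1 - Real.cos (s * x)) ν := by
    intro s
    apply Integrable.mono' (hν.const_mul (s ^ 2))
    · exact (continuous_const.sub
        (Real.continuous_cos.comp (continuous_const.mul continuous_id))).aestronglyMeasurable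
    · filter_upwards with x
      rw [Real.norm_eq_abs, abs_of_nonneg (by nlinarith [Real.cos_le_one (s * x)])]
      nlinarith [Real.one_sub_sq_div_two_le_cos (x := s * x), sq_nonneg (s * x), sq_nonneg s,
        sq_nonneg x, sq_nonneg (s * x)]
  have hcle : ∀ s : ℝ, cfun s ≤ ψ s := by
    intro s
    rw [hcfundef, hψdef]
    simp only
    rw [← integral_const_mul 4]
    exact integral_mono (hcos_int s) ((hmin_int s).const_mul 4)
      (fun x => stmt18_one_sub_cos_le (s * x))
  have hcnn : ∀ s : ℝ, 0 ≤ cfun s := by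
    intro s
    apply integral_nonneg
    intro x
    simp only [Pi.zero_apply]
    nlinarith [Real.cos_le_one (s * x)]
  -- the functions h, k, b
  set h : ℝ → ℝ := fun s => (1 - Real.exp (-t * ψ s)) / s ^ 2 with hhdef
  set k : ℝ → ℝ := fun s => min (t * ψ s) 1 / s ^ 2 with hkdef
  set b : ℝ → ℝ := fun s => min (4 * t * C) ((s ^ 2)⁻¹) with hbdef
  have hhnn : ∀ s, 0 ≤ h s := by
    intro s
    apply div_nonneg _ (sq_nonneg s)
    have : Real.exp (-t * ψ s) ≤ 1 := by
      rw [Real.exp_le_one_iff]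
      have := hψnn s
      nlinarith
    linarith
  have hknn : ∀ s, 0 ≤ k s := fun s =>
    div_nonneg (le_min (mul_nonneg ht.le (hψnn s)) zero_le_one) (sq_nonneg s)
  have hhk : ∀ s, h s ≤ k s := by
    intro s
    rcases eq_or_ne s 0 with rfl | hs
    · rw [hhdef, hkdef]
      simp
    · have hs2 : (0:ℝ) < s ^ 2 := by positivity
      have hnum := stmt18_one_sub_exp_le (mul_nonneg ht.le (hψnn s))
      rw [← neg_mul] at hnum
      rw [hhdef, hkdef]
      simp only
      rw [div_le_div_iff₀ hs2 hs2]
      exact mul_le_mul_of_nonneg_right hnum hs2.le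
  have hkb : ∀ s, k s ≤ b s := by
    intro s
    rcases eq_or_ne s 0 with rfl | hs
    · rw [hkdef, hbdef]
      simp only
      rw [zero_pow two_ne_zero, div_zero]
      exact le_min (by positivity) (by simp)
    · have hs2 : (0:ℝ) < s ^ 2 := by positivity
      apply le_min
      · rw [hkdef]
        simp only
        rw [div_le_iff₀ hs2]
        calc min (t * ψ s) 1 ≤ t * ψ s := min_le_left _ _
          _ ≤ t * (4 * (s ^ 2 * C)) := mul_le_mul_of_nonneg_left (hψle s) ht.le
          _ = 4 * t * C * s ^ 2 := by ring
      · rw [hkdef]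
        simp only
        rw [div_le_iff₀ hs2, inv_mul_cancel₀ (ne_of_gt hs2)]
        exact min_le_right _ _
  have hbnn : ∀ s, 0 ≤ b s := fun s => le_min (by positivity) (by positivity)
  have hbint : Integrable b := by
    apply Integrable.mono' ((integrable_inv_one_add_sq).const_mul (2 * max (4 * t * C) 1))
    · exact (measurable_const.min ((measurable_id.pow_const 2).inv)).aestronglyMeasurable
    · filter_upwards with s
      rw [Real.norm_eq_abs, abs_of_nonneg (hbnn s)]
      exact stmt18_bound_le (by positivity) s
  have hhmeas : Measurable h := by
    apply Measurable.div _ (measurable_id.pow_const 2)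
    exact measurable_const.sub (Real.measurable_exp.comp (hψmeas.const_mul (-t)))
  have hkmeas : Measurable k := by
    apply Measurable.div _ (measurable_id.pow_const 2)
    exact (hψmeas.const_mul t).min measurable_const
  have hhint : Integrable h := by
    apply hbint.mono' hhmeas.aestronglyMeasurable
    filter_upwards with s
    rw [Real.norm_eq_abs, abs_of_nonneg (hhnn s)]
    exact le_trans (hhk s) (hkb s)
  have hkint : Integrable k := by
    apply hbint.mono' hkmeas.aestronglyMeasurable
    filter_upwards with s
    rw [Real.norm_eq_abs, abs_of_nonneg (hknn s)]
    exact hkb s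
  -- characteristic function computation
  have hYm : AEStronglyMeasurable (Y t) μ := (hint t ht).aestronglyMeasurable
  have hcosY_int : ∀ s : ℝ, Integrable (fun ω => Real.cos (s * Y t ω)) μ := by
    intro s
    apply Integrable.mono' (integrable_const (1:ℝ))
    · exact (Real.continuous_cos.comp
        (continuous_const.mul continuous_id)).comp_aestronglyMeasurable hYm
    · filter_upwards with ω
      rw [Real.norm_eq_abs]
      exact Real.abs_cos_le_one _
  have hφ : ∀ s : ℝ, ∫ ω, Real.cos (s * Y t ω) ∂μ = Real.exp (-t * cfun s) := by
    intro s
    have hgc : Continuous (fun y : ℝ => Complex.exp ((s:ℂ) * (y:ℂ) * Complex.I)) := by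
      fun_prop
    have hexp_int : Integrable (fun ω => Complex.exp (s * Y t ω * Complex.I)) μ := by
      apply Integrable.mono' (integrable_const (1:ℝ))
      · exact hgc.comp_aestronglyMeasurable hYm
      · filter_upwards with ω
        have : ((s : ℂ) * (Y t ω : ℂ) * Complex.I) = ((s * Y t ω : ℝ) : ℂ) * Complex.I := by
          push_cast; ring
        rw [this, Complex.norm_exp_ofReal_mul_I]
    have h1 := hchar t ht s
    have h3 := Complex.reCLM.integral_comp_comm hexp_int
    simp only [Complex.reCLM_apply] at h3
    have hre : ∀ ω, Real.cos (s * Y t ω) = (Complex.exp ((s:ℂ) * (Y t ω : ℂ) * Complex.I)).re := by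
      intro ω
      have hcast : ((s : ℂ) * (Y t ω : ℂ) * Complex.I) = ((s * Y t ω : ℝ) : ℂ) * Complex.I := by
        push_cast; ring
      rw [hcast, Complex.exp_ofReal_mul_I_re]
    calc ∫ ω, Real.cos (s * Y t ω) ∂μ
        = ∫ ω, (Complex.exp ((s:ℂ) * (Y t ω : ℂ) * Complex.I)).re ∂μ :=
          integral_congr_ae (Filter.Eventually.of_forall fun ω => hre ω)
      _ = (∫ ω, Complex.exp ((s:ℂ) * (Y t ω : ℂ) * Complex.I) ∂μ).re := h3
      _ = Real.exp (-t * cfun s) := by rw [h1]; exact Complex.ofReal_re _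
  have h1sub : ∀ s : ℝ, ∫ ω, (1 - Real.cos (s * Y t ω)) ∂μ = 1 - Real.exp (-t * cfun s) := by
    intro s
    rw [integral_sub (integrable_const 1) (hcosY_int s), integral_const, probReal_univ,
      one_smul, hφ s]
  have step4 : ∀ s : ℝ, ∫⁻ ω, ENNReal.ofReal ((1 - Real.cos (s * Y t ω)) / s ^ 2) ∂μ
      = ENNReal.ofReal ((1 - Real.exp (-t * cfun s)) / s ^ 2) := by
    intro s
    rcases eq_or_ne s 0 with rfl | hs
    · have hc0 : cfun 0 = 0 := by
        rw [hcfundef]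
        simp
      simp [hc0]
    · have hi : Integrable (fun ω => (1 - Real.cos (s * Y t ω)) / s ^ 2) μ :=
        ((integrable_const 1).sub (hcosY_int s)).div_const _
      have hnn : 0 ≤ᵐ[μ] fun ω => (1 - Real.cos (s * Y t ω)) / s ^ 2 := by
        filter_upwards with ω
        simp only [Pi.zero_apply]
        apply div_nonneg _ (sq_nonneg s)
        nlinarith [Real.cos_le_one (s * Y t ω)]
      rw [← ofReal_integral_eq_lintegral_ofReal hi hnn, integral_div, h1sub s]
  have hprodmeas : AEMeasurable
      (Function.uncurry fun ω s => ENNReal.ofReal ((1 - Real.cos (s * Y t ω)) / s ^ 2))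
      (μ.prod volume) := by
    have hY2 : AEMeasurable (fun p : Ω × ℝ => Y t p.1) (μ.prod volume) :=
      hYm.comp_fst.aemeasurable
    have base : AEMeasurable (fun p : Ω × ℝ => (1 - Real.cos (p.2 * Y t p.1)) / p.2 ^ 2)
        (μ.prod volume) :=
      (aemeasurable_const.sub
        (Real.measurable_cos.comp_aemeasurable (measurable_snd.aemeasurable.mul hY2))).div
        ((measurable_snd.pow_const 2).aemeasurable)
    exact ENNReal.measurable_ofReal.comp_aemeasurable base
  -- main chain for part 1
  have step1 : ∀ ω, (∫⁻ s, ENNReal.ofReal ((1 - Real.cos (s * Y t ω)) / s ^ 2))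
      = ENNReal.ofReal (π * |Y t ω|) := by
    intro ω
    have habs := stmt18_abs' (Y t ω)
    have hnn : 0 ≤ᵐ[(volume : Measure ℝ)] fun s => (1 - Real.cos (s * Y t ω)) / s ^ 2 := by
      filter_upwards with s
      simp only [Pi.zero_apply]
      apply div_nonneg _ (sq_nonneg s)
      nlinarith [Real.cos_le_one (s * Y t ω)]
    rw [← ofReal_integral_eq_lintegral_ofReal habs.1 hnn, habs.2]
  have hπY_int : Integrable (fun ω => π * |Y t ω|) μ := (hint t ht).abs.const_mul π
  have main1 : ENNReal.ofReal (π * ∫ ω, |Y t ω| ∂μ) ≤ ENNReal.ofReal (∫ s, h s) := by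
    have step2 : ENNReal.ofReal (π * ∫ ω, |Y t ω| ∂μ) = ∫⁻ ω, ENNReal.ofReal (π * |Y t ω|) ∂μ := by
      rw [← integral_const_mul]
      apply ofReal_integral_eq_lintegral_ofReal hπY_int
      filter_upwards with ω
      simp only [Pi.zero_apply]
      positivity
    rw [step2]
    calc ∫⁻ ω, ENNReal.ofReal (π * |Y t ω|) ∂μ
        = ∫⁻ ω, ∫⁻ s, ENNReal.ofReal ((1 - Real.cos (s * Y t ω)) / s ^ 2) ∂volume ∂μ :=
          lintegral_congr fun ω => (step1 ω).symm
      _ = ∫⁻ s, ∫⁻ ω, ENNReal.ofReal ((1 - Real.cos (s * Y t ω)) / s ^ 2) ∂μ ∂volume :=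
          lintegral_lintegral_swap hprodmeas
      _ = ∫⁻ s, ENNReal.ofReal ((1 - Real.exp (-t * cfun s)) / s ^ 2) ∂volume :=
          lintegral_congr step4
      _ ≤ ∫⁻ s, ENNReal.ofReal (h s) ∂volume := by
          apply lintegral_mono
          intro s
          apply ENNReal.ofReal_le_ofReal
          rcases eq_or_ne s 0 with rfl | hs
          · rw [hhdef]
            simp
          · have hs2 : (0:ℝ) < s ^ 2 := by positivity
            rw [hhdef]
            simp only
            rw [div_le_div_iff₀ hs2 hs2]
            have hexp : Real.exp (-t * ψ s) ≤ Real.exp (-t * cfun s) := by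
              apply Real.exp_le_exp.mpr
              nlinarith [hcle s]
            nlinarith [hs2]
      _ = ENNReal.ofReal (∫ s, h s) := by
          rw [ofReal_integral_eq_lintegral_ofReal hhint]
          filter_upwards with s
          simp only [Pi.zero_apply]
          exact hhnn s
  have hintnn : 0 ≤ ∫ s, h s := integral_nonneg hhnn
  have part1 : (∫ ω, |Y t ω| ∂μ) ≤ (1 / π) * ∫ s, h s := by
    have h1 : π * ∫ ω, |Y t ω| ∂μ ≤ ∫ s, h s := (ENNReal.ofReal_le_ofReal_iff hintnn).mp main1
    have hπ := Real.pi_pos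
    rw [one_div, inv_mul_eq_div, le_div_iff₀ hπ]
    linarith [h1]
  -- part 2
  have heq_Iic : ∫ s in Iic (0:ℝ), h s = ∫ s in Ioi (0:ℝ), h s := by
    have e := integral_comp_neg_Ioi (0:ℝ) h
    rw [neg_zero] at e
    rw [← e]
    apply setIntegral_congr_fun measurableSet_Ioi
    intro s _
    show h (-s) = h s
    rw [hhdef]
    simp only
    rw [hψeven s, neg_sq]
  have htot : ∫ s, h s = 2 * ∫ s in Ioi (0:ℝ), h s := by
    rw [← intervalIntegral.integral_Iic_add_Ioi hhint.integrableOn hhint.integrableOn, heq_Iic]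
    ring
  have hmono2 : ∫ s in Ioi (0:ℝ), h s ≤ ∫ s in Ioi (0:ℝ), k s :=
    setIntegral_mono_on hhint.integrableOn hkint.integrableOn measurableSet_Ioi
      (fun s _ => hhk s)
  set c0 : ℝ := t ^ (-(1:ℝ)/2) with hc0def
  have hc0pos : 0 < c0 := Real.rpow_pos_of_pos ht _
  have hc0inv : c0⁻¹ = t ^ ((1:ℝ)/2) := by
    rw [hc0def, show (-(1:ℝ)/2) = -((1:ℝ)/2) by ring, Real.rpow_neg ht.le, inv_inv]
  have hsub : ∫ s in Ioi (0:ℝ), k s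
      = t ^ ((1:ℝ)/2) * ∫ s in Ioi (0:ℝ), min (t * ψ (c0 * s)) 1 / s ^ 2 := by
    have e := integral_comp_mul_left_Ioi k 0 hc0pos
    rw [mul_zero] at e
    have e2 : ∫ s in Ioi (0:ℝ), min (t * ψ (c0 * s)) 1 / s ^ 2
        = ∫ s in Ioi (0:ℝ), c0 ^ 2 * k (c0 * s) := by
      apply setIntegral_congr_fun measurableSet_Ioi
      intro s hs
      have hs0 : s ≠ 0 := ne_of_gt hs
      rw [hkdef]
      simp only
      rw [mul_pow]
      field_simp
    rw [e2, integral_const_mul, e, smul_eq_mul, ← hc0inv]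
    field_simp
  have hπ := Real.pi_pos
  have part2 : (1 / π) * (∫ s, h s)
      ≤ (2 * t ^ ((1:ℝ)/2) / π) * ∫ s in Ioi (0:ℝ), min (t * ψ (c0 * s)) 1 / s ^ 2 := by
    calc (1 / π) * ∫ s, h s = (2 / π) * ∫ s in Ioi (0:ℝ), h s := by
          rw [htot]; ring
      _ ≤ (2 / π) * ∫ s in Ioi (0:ℝ), k s := by
          apply mul_le_mul_of_nonneg_left hmono2 (by positivity)
      _ = (2 * t ^ ((1:ℝ)/2) / π) * ∫ s in Ioi (0:ℝ), min (t * ψ (c0 * s)) 1 / s ^ 2 := by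
          rw [hsub]; ring
  exact ⟨part1, part2⟩
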